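/- Fix real constants τ, κ, ν with δ := (κ − 4τ²)ν² − κ ≠ 0, and real constants a₁₁, a₁₂, a₂₂. Define functions b₁₁, b₂₁, b₁₂, b₂₂ : ℝ → ℝ by b₁₁(t) = 1 + 4δ⁻¹τ²a₁₁ s_δ(t) − 2δ⁻¹τ(a₁₂+τ)(c_δ(t)−1) − a₁₁δ⁻¹(δ+4τ²)t, b₂₁(t) = 2τδ⁻¹a₁₁(c_δ(t)−1) − (a₁₂+τ)s_δ(t), b₁₂(t) = δ⁻¹(2τ(2τa₁₂+δ+2τ²)s_δ(t) − 2τa₂₂(c_δ(t)−1) − (δ+4τ²)(a₁₂+τ)t), b₂₂(t) = 1 − a₂₂ s_δ(t) + δ⁻¹(2τa₁₂+δ+2τ²)(c_δ(t)−1). Then for each j ∈ {1,2}, the pair (b₁ⱼ, b₂ⱼ) solves the system b₁ⱼ'' − 2τ b₂ⱼ' = 0 and b₂ⱼ'' + 2τ b₁ⱼ' + (κ−4τ²)(1−ν²) b₂ⱼ = 0, with initial conditions b₁₁(0)=b₂₂(0)=1, b₁₂(0)=b₂₁(0)=0, b₁₁'(0)=−a₁₁, b₂₂'(0)=−a₂₂,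 b₁₂'(0)=τ−a₁₂, b₂₁'(0)=−τ−a₁₂. -/

import Mathlib

theorem stmt_2 (τ κ ν : ℝ) (δ : ℝ) (hδdef : δ = (κ - 4 * τ ^ 2) * ν ^ 2 - κ) (hδ : δ ≠ 0)
    (a₁₁ a₁₂ a₂₂ : ℝ) (s c : ℝ → ℝ)
    (hs' : ∀ t, HasDerivAt s (c t) t) (hc' : ∀ t, HasDerivAt c (δ * s t) t)
    (hs0 : s 0 = 0) (hc0 : c 0 = 1)
    (b₁₁ b₂₁ b₁₂ b₂₂ : ℝ → ℝ)
    (hb11 : b₁₁ = fun t => 1 + 4 * δ⁻¹ * τ ^ 2 * a₁₁ * s t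
      - 2 * δ⁻¹ * τ * (a₁₂ + τ) * (c t - 1) - a₁₁ * δ⁻¹ * (δ + 4 * τ ^ 2) * t)
    (hb21 : b₂₁ = fun t => 2 * τ * δ⁻¹ * a₁₁ * (c t - 1) - (a₁₂ + τ) * s t)
    (hb12 : b₁₂ = fun t => δ⁻¹ * (2 * τ * (2 * τ * a₁₂ + δ + 2 * τ ^ 2) * s t
      - 2 * τ * a₂₂ * (c t - 1) - (δ + 4 * τ ^ 2) * (a₁₂ + τ) * t))
    (hb22 : b₂₂ = fun t => 1 - a₂₂ * s t + δ⁻¹ * (2 * τ * a₁₂ + δ + 2 * τ ^ 2) * (c t - 1)) :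
    (∀ t, deriv (deriv b₁₁) t - 2 * τ * deriv b₂₁ t = 0) ∧
    (∀ t, deriv (deriv b₂₁) t + 2 * τ * deriv b₁₁ t
      + (κ - 4 * τ ^ 2) * (1 - ν ^ 2) * b₂₁ t = 0) ∧
    (∀ t, deriv (deriv b₁₂) t - 2 * τ * deriv b₂₂ t = 0) ∧
    (∀ t, deriv (deriv b₂₂) t + 2 * τ * deriv b₁₂ t
      + (κ - 4 * τ ^ 2) * (1 - ν ^ 2) * b₂₂ t = 0) ∧
    b₁₁ 0 = 1 ∧ b₂₂ 0 = 1 ∧ b₁₂ 0 = 0 ∧ b₂₁ 0 = 0 ∧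
    deriv b₁₁ 0 = -a₁₁ ∧ deriv b₂₂ 0 = -a₂₂ ∧
    deriv b₁₂ 0 = τ - a₁₂ ∧ deriv b₂₁ 0 = -τ - a₁₂ := by
  -- every function in sight has the canonical form A + B s + C c + D t
  have key : ∀ A B C D : ℝ, ∀ t : ℝ,
      HasDerivAt (fun t => A + B * s t + C * c t + D * t)
        (D + C * δ * s t + B * c t + 0 * t) t := by
    intro A B C D t
    have h := (((hasDerivAt_const t A).add ((hs' t).const_mul B)).add
      ((hc' t).const_mul C)).add ((hasDerivAt_id t).const_mul D)
    exact h.congr_deriv (by ring)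
  have hd : ∀ A B C D : ℝ, deriv (fun t => A + B * s t + C * c t + D * t)
      = fun t => D + C * δ * s t + B * c t + 0 * t :=
    fun A B C D => funext fun t => (key A B C D t).deriv
  -- canonical forms of the four functions
  have e11 : b₁₁ = fun t => (1 + 2 * δ⁻¹ * τ * (a₁₂ + τ)) + (4 * δ⁻¹ * τ ^ 2 * a₁₁) * s t
      + (-(2 * δ⁻¹ * τ * (a₁₂ + τ))) * c t + (-(a₁₁ * δ⁻¹ * (δ + 4 * τ ^ 2))) * t := by
    rw [hb11]; funext t; ring
  have e21 : b₂₁ = fun t => (-(2 * τ * δ⁻¹ * a₁₁)) + (-(a₁₂ + τ)) * s t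
      + (2 * τ * δ⁻¹ * a₁₁) * c t + (0 : ℝ) * t := by
    rw [hb21]; funext t; ring
  have e12 : b₁₂ = fun t => (2 * τ * a₂₂ * δ⁻¹) + (δ⁻¹ * (2 * τ * (2 * τ * a₁₂ + δ + 2 * τ ^ 2))) * s t
      + (-(2 * τ * a₂₂ * δ⁻¹)) * c t + (-(δ⁻¹ * ((δ + 4 * τ ^ 2) * (a₁₂ + τ)))) * t := by
    rw [hb12]; funext t; ring
  have e22 : b₂₂ = fun t => (1 - δ⁻¹ * (2 * τ * a₁₂ + δ + 2 * τ ^ 2)) + (-a₂₂) * s t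
      + (δ⁻¹ * (2 * τ * a₁₂ + δ + 2 * τ ^ 2)) * c t + (0 : ℝ) * t := by
    rw [hb22]; funext t; ring
  have hK : (κ - 4 * τ ^ 2) * (1 - ν ^ 2) = -(δ + 4 * τ ^ 2) := by rw [hδdef]; ring
  have hδδ : δ⁻¹ * δ = 1 := inv_mul_cancel₀ hδ
  refine ⟨?_, ?_, ?_, ?_, ?_, ?_, ?_, ?_, ?_, ?_, ?_, ?_⟩
  · intro t
    rw [e11, e21, hd, hd, hd]
    simp only
    field_simp
    ring
  · intro t
    rw [e21, e11, hd, hd, hd, hK]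
    simp only
    field_simp
    ring
  · intro t
    rw [e12, e22, hd, hd, hd]
    simp only
    field_simp
    ring
  · intro t
    rw [e22, e12, hd, hd, hd, hK]
    simp only
    field_simp
    ring
  · rw [e11]; simp [hs0, hc0]
  · rw [e22]; simp [hs0, hc0]
  · rw [e12]; simp [hs0, hc0]
  · rw [e21]; simp [hs0, hc0]
  · rw [e11, hd]; simp only [hs0, hc0]
    field_simp
    ring
  · rw [e22, hd]; simp only [hs0, hc0]
    field_simp
    ring
  · rw [e12, hd]; simp only [hs0, hc0]
    field_simp
    ring
  · rw [e21, hd]; simp only [hs0, hc0]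
    field_simp
    ring
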